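/- Let d > 0 and define σ : ℝ → ℝ by σ(x) = 0 for x ≤ 0, σ(x) = (2d·x³ − x⁴)/(2d³) for 0 < x ≤ d, and σ(x) = x − d/2 for x > d. Then σ is convex on ℝ, monotone non-decreasing, 1-Lipschitz, and satisfies 0 ≤ max(x, 0) − σ(x) ≤ d/2 for all x ∈ ℝ; i.e., σ uniformly approximates the ReLU function max(x,0) with error at most d/2. -/

import Mathlib

/-- Derivative of the middle polynomial piece. -/
lemma stmt_4_aux_hasDerivAt (d x : ℝ) :
    HasDerivAt (fun t : ℝ => (2 * d * t ^ 3 - t ^ 4) / (2 * d ^ 3))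
      ((6 * d * x ^ 2 - 4 * x ^ 3) / (2 * d ^ 3)) x := by
  have h : HasDerivAt (fun t : ℝ => 2 * d * t ^ 3 - t ^ 4)
      (2 * d * (3 * x ^ 2) - 4 * x ^ 3) x := by
    have h1 : HasDerivAt (fun t : ℝ => t ^ 3) (3 * x ^ 2) x := by
      simpa using hasDerivAt_pow 3 x
    have h2 : HasDerivAt (fun t : ℝ => t ^ 4) (4 * x ^ 3) x := by
      simpa using hasDerivAt_pow 4 x
    exact (h1.const_mul (2 * d)).sub h2
  have := h.div_const (2 * d ^ 3)
  rw [show (6 * d * x ^ 2 - 4 * x ^ 3) = 2 * d * (3 * x ^ 2) - 4 * x ^ 3 by ring]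
  exact this

/-- The smoothed ReLU activation `σ` (Eq. (7) of the paper) is convex, monotone
non-decreasing, 1-Lipschitz, and uniformly approximates `ReLU(x) = max x 0`
with error at most `d/2`. -/
theorem stmt_4 (d : ℝ) (hd : 0 < d) (σ : ℝ → ℝ)
    (h0 : ∀ x : ℝ, x ≤ 0 → σ x = 0)
    (h1 : ∀ x : ℝ, 0 < x → x ≤ d → σ x = (2 * d * x ^ 3 - x ^ 4) / (2 * d ^ 3))
    (h2 : ∀ x : ℝ, d < x → σ x = x - d / 2) :
    ConvexOn ℝ Set.univ σ ∧ Monotone σ ∧ LipschitzWith 1 σ ∧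
      ∀ x : ℝ, 0 ≤ max x 0 - σ x ∧ max x 0 - σ x ≤ d / 2 := by
  have h2d3 : (0 : ℝ) < 2 * d ^ 3 := by positivity
  set g : ℝ → ℝ := fun x =>
    if x ≤ 0 then 0 else if x ≤ d then (6 * d * x ^ 2 - 4 * x ^ 3) / (2 * d ^ 3) else 1 with hg
  -- values of g
  have hg_le : ∀ x, x ≤ 0 → g x = 0 := fun x hx => by simp [hg, hx]
  have hg_mid : ∀ x, 0 < x → x ≤ d → g x = (6 * d * x ^ 2 - 4 * x ^ 3) / (2 * d ^ 3) := by
    intro x hx hxd; simp [hg, not_le.2 hx, hxd]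
  have hg_gt : ∀ x, d < x → g x = 1 := by
    intro x hx; simp [hg, not_le.2 (lt_trans hd hx), not_le.2 hx]
  -- σ has derivative g everywhere
  have hσp : ∀ x ∈ Set.Icc (0:ℝ) d, σ x = (2 * d * x ^ 3 - x ^ 4) / (2 * d ^ 3) := by
    intro x hx
    rcases eq_or_lt_of_le hx.1 with h | h
    · rw [h0 x (le_of_eq h.symm)]; rw [← h]; ring
    · exact h1 x h hx.2
  have hderiv : ∀ x, HasDerivAt σ (g x) x := by
    intro x
    rcases lt_trichotomy x 0 with hx | hx | hx
    · -- x < 0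
      rw [hg_le x hx.le]
      refine (hasDerivAt_const x (0:ℝ)).congr_of_eventuallyEq ?_
      filter_upwards [Iio_mem_nhds hx] with y hy using h0 y (le_of_lt hy)
    · -- x = 0
      subst hx
      have hIic : HasDerivWithinAt σ 0 (Set.Iic 0) 0 := by
        refine ((hasDerivAt_const (0:ℝ) (0:ℝ)).hasDerivWithinAt).congr ?_ ?_
        · intro y hy; exact h0 y hy
        · exact h0 0 le_rfl
      have hIcc : HasDerivWithinAt σ 0 (Set.Icc 0 d) 0 := by
        have hp := (stmt_4_aux_hasDerivAt d 0).hasDerivWithinAt (s := Set.Icc 0 d)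
        have hp' : HasDerivWithinAt (fun t : ℝ => (2 * d * t ^ 3 - t ^ 4) / (2 * d ^ 3))
            0 (Set.Icc 0 d) 0 := by simpa using hp
        refine hp'.congr hσp (hσp 0 ⟨le_rfl, hd.le⟩)
      have := (hIic.union hIcc)
      rw [Set.Iic_union_Icc_eq_Iic hd.le] at this
      have h := this.hasDerivAt (Iic_mem_nhds hd)
      rwa [hg_le 0 le_rfl]
    · -- x > 0
      rcases lt_trichotomy x d with hxd | hxd | hxd
      · -- 0 < x < d
        rw [hg_mid x hx hxd.le]
        refine (stmt_4_aux_hasDerivAt d x).congr_of_eventuallyEq ?_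
        have : Set.Ioo (0:ℝ) d ∈ nhds x := Ioo_mem_nhds hx hxd
        filter_upwards [this] with y hy using h1 y hy.1 hy.2.le
      · -- x = d
        subst hxd
        have hIcc : HasDerivWithinAt σ 1 (Set.Icc 0 x) x := by
          have hp := (stmt_4_aux_hasDerivAt x x).hasDerivWithinAt (s := Set.Icc 0 x)
          have hval : (6 * x * x ^ 2 - 4 * x ^ 3) / (2 * x ^ 3) = 1 := by
            field_simp; ring
          rw [hval] at hp
          exact hp.congr hσp (hσp x ⟨hx.le, le_rfl⟩)
        have hIci : HasDerivWithinAt σ 1 (Set.Ici x) x := by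
          have hlin : HasDerivAt (fun t : ℝ => t - x / 2) 1 x := by
            simpa using (hasDerivAt_id x).sub_const (x / 2)
          refine (hlin.hasDerivWithinAt).congr ?_ ?_
          · intro y hy
            rcases eq_or_lt_of_le (Set.mem_Ici.1 hy) with h | h
            · rw [← h, hσp x ⟨hx.le, le_rfl⟩]; field_simp
            · exact h2 y h
          · rw [hσp x ⟨hx.le, le_rfl⟩]; field_simp
        have := hIcc.union hIci
        rw [Set.Icc_union_Ici_eq_Ici hx.le] at this
        have h := this.hasDerivAt (Ici_mem_nhds hx)
        have hval : g x = 1 := by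
          rw [hg_mid x hx le_rfl]; field_simp; ring
        rwa [hval]
      · -- x > d
        rw [hg_gt x hxd]
        have hlin : HasDerivAt (fun t : ℝ => t - d / 2) 1 x := by
          simpa using (hasDerivAt_id x).sub_const (d / 2)
        refine hlin.congr_of_eventuallyEq ?_
        filter_upwards [Ioi_mem_nhds hxd] with y hy using h2 y hy
  have hdiff : Differentiable ℝ σ := fun x => (hderiv x).differentiableAt
  have hderiv_eq : deriv σ = g := funext fun x => (hderiv x).deriv
  -- bounds on g
  have hg_nonneg : ∀ x, 0 ≤ g x := by
    intro x
    rcases le_or_gt x 0 with hx | hx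
    · rw [hg_le x hx]
    · rcases le_or_gt x d with hxd | hxd
      · rw [hg_mid x hx hxd]
        apply div_nonneg _ h2d3.le
        nlinarith [sq_nonneg x, mul_nonneg (sq_nonneg x) (sub_nonneg.2 hxd)]
      · rw [hg_gt x hxd]; norm_num
  have hg_le_one : ∀ x, g x ≤ 1 := by
    intro x
    rcases le_or_gt x 0 with hx | hx
    · rw [hg_le x hx]; norm_num
    · rcases le_or_gt x d with hxd | hxd
      · rw [hg_mid x hx hxd]
        rw [div_le_one h2d3]
        nlinarith [mul_nonneg (sq_nonneg (d - x)) (by linarith : (0:ℝ) ≤ d + 2 * x)]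
      · rw [hg_gt x hxd]
  -- g is monotone
  have hg_mono : Monotone g := by
    intro x y hxy
    rcases le_or_gt x 0 with hx | hx
    · rw [hg_le x hx]; exact hg_nonneg y
    · rcases le_or_gt x d with hxd | hxd
      · rcases le_or_gt y d with hyd | hyd
        · have hy : 0 < y := lt_of_lt_of_le hx hxy
          rw [hg_mid x hx hxd, hg_mid y hy hyd]
          have hnum : 6 * d * x ^ 2 - 4 * x ^ 3 ≤ 6 * d * y ^ 2 - 4 * y ^ 3 := by
            nlinarith [mul_nonneg (sub_nonneg.2 hxy) (mul_nonneg hx.le (sub_nonneg.2 hxd)),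
              mul_nonneg (sub_nonneg.2 hxy) (mul_nonneg hy.le (sub_nonneg.2 hyd)),
              mul_nonneg (sub_nonneg.2 hxy) (sq_nonneg (x - y))]
          exact (div_le_div_iff_of_pos_right h2d3).2 hnum
        · rw [hg_gt y hyd]; exact hg_le_one x
      · have hyd : d < y := lt_of_lt_of_le hxd hxy
        rw [hg_gt x hxd, hg_gt y hyd]
  -- monotonicity of σ
  have hmono : Monotone σ :=
    monotone_of_deriv_nonneg hdiff (by rw [hderiv_eq]; exact hg_nonneg)
  -- Lipschitz
  have hlip : LipschitzWith 1 σ := by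
    apply lipschitzWith_of_nnnorm_deriv_le hdiff
    intro x
    rw [hderiv_eq, ← NNReal.coe_le_coe, coe_nnnorm, Real.norm_eq_abs, NNReal.coe_one]
    exact abs_le.2 ⟨by linarith [hg_nonneg x], hg_le_one x⟩
  -- convexity
  have hconv : ConvexOn ℝ Set.univ σ := by
    apply MonotoneOn.convexOn_of_deriv convex_univ hdiff.continuous.continuousOn
      (by rw [interior_univ]; exact hdiff.differentiableOn)
    rw [interior_univ, hderiv_eq]
    exact hg_mono.monotoneOn _
  refine ⟨hconv, hmono, hlip, ?_⟩
  intro x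
  rcases le_or_gt x 0 with hx | hx
  · rw [h0 x hx, max_eq_right hx]
    constructor <;> linarith
  · rw [max_eq_left hx.le]
    rcases le_or_gt x d with hxd | hxd
    · rw [h1 x hx hxd]
      constructor
      · rw [sub_nonneg, div_le_iff₀ h2d3]
        nlinarith [mul_nonneg (mul_nonneg (mul_nonneg hd.le hx.le) (sub_nonneg.2 hxd))
          (by linarith : (0:ℝ) ≤ d + x), sq_nonneg (x ^ 2)]
      · rw [sub_le_iff_le_add, ← sub_le_iff_le_add', le_div_iff₀ h2d3]
        nlinarith [mul_nonneg (mul_nonneg (mul_nonneg (sub_nonneg.2 hxd) (sub_nonneg.2 hxd))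
          (sub_nonneg.2 hxd)) (by linarith : (0:ℝ) ≤ d + x)]
    · rw [h2 x hxd]
      constructor <;> linarith
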